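/- arXiv:2408.12967 — 3 statements merged into one kernel-verified Lean document; each statement's English description precedes it below -/
import Mathlib

section
/- (Single common due date feasibility) Consider a finite set J of jobs with processing times p_j ≥ 1, release dates r_j, and a common due date d. If for every job j it holds that the sum of p_{j'} over all jobs j' with r_{j'} ≥ r_j is at most d - r_j, then there exists a schedule in which all jobs are early, i.e., an injective assignment of disjoint execution intervals with each job starting at or after its release date and completing by time d. -/
/-- Single common due date feasibility (sufficiency). -/
theorem stmt_2 (n : ℕ) (p r : Fin n → ℕ) (hp : ∀ j, 1 ≤ p j) (d : ℕ)
    (hfeas : ∀ j, ∑ j' ∈ Finset.univ.filter (fun j' => r j ≤ r j'), p j' ≤ d - r j) :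
    ∃ σ : Fin n → ℕ,
      (∀ j, r j ≤ σ j) ∧
      (∀ i j, i ≠ j →
        Disjoint (Set.Ico (σ i) (σ i + p i)) (Set.Ico (σ j) (σ j + p j))) ∧
      (∀ j, σ j + p j ≤ d) := by
  -- S j = total processing of jobs after-or-equal j in lex order on (r j, j)
  set T : Fin n → Finset (Fin n) :=
    fun j => Finset.univ.filter (fun j' => r j < r j' ∨ (r j = r j' ∧ j ≤ j')) with hT
  set S : Fin n → ℕ := fun j => ∑ j' ∈ T j, p j' with hS
  have hmem : ∀ j, j ∈ T j := by
    intro j; simp [hT]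
  have hSle : ∀ j, S j ≤ d - r j := by
    intro j
    refine le_trans (Finset.sum_le_sum_of_subset ?_) (hfeas j)
    intro x hx
    simp only [hT, Finset.mem_filter, Finset.mem_univ, true_and] at hx ⊢
    rcases hx with h | ⟨h, _⟩ <;> omega
  have hpS : ∀ j, p j ≤ S j := fun j => Finset.single_le_sum (fun i _ => Nat.zero_le _) (hmem j)
  have hrd : ∀ j, r j ≤ d := by
    intro j
    have h1 := hfeas j
    have h2 : p j ≤ ∑ j' ∈ Finset.univ.filter (fun j' => r j ≤ r j'), p j' :=
      Finset.single_le_sum (fun i _ => Nat.zero_le _) (by simp)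
    have := hp j; omega
  have hSd : ∀ j, S j ≤ d := fun j => le_trans (hSle j) (Nat.sub_le _ _)
  -- key: strict lex order implies S j + p i ≤ S i
  have key : ∀ i j : Fin n, (r i < r j ∨ (r i = r j ∧ i < j)) → S j + p i ≤ S i := by
    intro i j hij
    have hsub : insert i (T j) ⊆ T i := by
      intro x hx
      simp only [Finset.mem_insert, hT, Finset.mem_filter, Finset.mem_univ, true_and] at hx ⊢
      rcases hx with rfl | hx
      · right; exact ⟨rfl, le_refl _⟩
      · rcases hx with h | ⟨h, h2⟩
        · rcases hij with h' | ⟨h', h''⟩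
          · left; omega
          · left; omega
        · rcases hij with h' | ⟨h', h''⟩
          · left; omega
          · right; exact ⟨by omega, le_trans (le_of_lt h'') h2⟩
    have hni : i ∉ T j := by
      simp only [hT, Finset.mem_filter, Finset.mem_univ, true_and]
      rintro (h | ⟨h, h2⟩)
      · rcases hij with h' | ⟨h', _⟩ <;> omega
      · rcases hij with h' | ⟨h', h''⟩
        · omega
        · exact absurd (lt_of_lt_of_le h'' h2) (lt_irrefl _)
    calc S j + p i = ∑ j' ∈ insert i (T j), p j' := by
          rw [Finset.sum_insert hni]; ring
      _ ≤ S i := Finset.sum_le_sum_of_subset hsub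
  refine ⟨fun j => d - S j, ?_, ?_, ?_⟩
  · intro j
    show r j ≤ d - S j
    have := hSle j; have := hrd j; omega
  · intro i j hij
    have sep : ∀ a b : Fin n, (r a < r b ∨ (r a = r b ∧ a < b)) →
        Disjoint (Set.Ico (d - S a) (d - S a + p a)) (Set.Ico (d - S b) (d - S b + p b)) := by
      intro a b hab
      have hk := key a b hab
      have h1 := hSd a
      rw [Set.disjoint_left]
      intro x hx1 hx2
      simp only [Set.mem_Ico] at hx1 hx2
      omega
    have htri : r i < r j ∨ (r i = r j ∧ i < j) ∨ r j < r i ∨ (r j = r i ∧ j < i) := by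
      have : (i : ℕ) ≠ (j : ℕ) := fun h => hij (Fin.ext h)
      rcases lt_trichotomy (r i) (r j) with h | h | h
      · left; exact h
      · have : i < j ∨ j < i := by
          rcases lt_or_gt_of_ne this with h' | h'
          · left; exact h'
          · right; exact h'
        tauto
      · tauto
    rcases htri with h | h | h | h
    · exact sep i j (Or.inl h)
    · exact sep i j (Or.inr h)
    · exact (sep j i (Or.inl h)).symm
    · exact (sep j i (Or.inr h)).symm
  · intro j
    show d - S j + p j ≤ d
    have := hpS j; have := hSd j; omega
end

section
/- (Bin Packing to scheduling, forward direction) Let items 1..m have sizes s_i and let there be b bins of capacity B. Construct a scheduling instance with: for each item i, a job with processing time s_i, release date 0, and due date bB + b - 1; and for each k ∈ {1,…,b-1}, a separator job with processing time 1, release date kB + k - 1, and due date kB + k. If the items can be partitioned into b parts each of total size at most B, then there is a schedule of all these jobs in which every job is early. -/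
private lemma ico_disj {a p c q : ℕ} (h : a + p ≤ c ∨ c + q ≤ a) :
    Disjoint (Set.Ico a (a + p)) (Set.Ico c (c + q)) := by
  rw [Set.disjoint_left]
  intro x hx hx'
  simp only [Set.mem_Ico] at hx hx'
  omega

/-- Bin Packing to scheduling, forward direction. -/
theorem stmt_8 (m b B : ℕ) (s : Fin m → ℕ)
    (hpack : ∃ f : Fin m → Fin b,
      ∀ k : Fin b, ∑ i ∈ Finset.univ.filter (fun i => f i = k), s i ≤ B) :
    let P : Fin m ⊕ Fin (b - 1) → ℕ := Sum.elim s (fun _ => 1)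
    let R : Fin m ⊕ Fin (b - 1) → ℕ :=
      Sum.elim (fun _ => 0) (fun k => (k.val + 1) * B + k.val)
    let D : Fin m ⊕ Fin (b - 1) → ℕ :=
      Sum.elim (fun _ => b * B + b - 1) (fun k => (k.val + 1) * B + k.val + 1)
    ∃ σ : Fin m ⊕ Fin (b - 1) → ℕ,
      (∀ j, R j ≤ σ j) ∧
      (∀ i j, i ≠ j →
        Disjoint (Set.Ico (σ i) (σ i + P i)) (Set.Ico (σ j) (σ j + P j))) ∧
      (∀ j, σ j + P j ≤ D j) := by
  intro P R D
  obtain ⟨f, hf⟩ := hpack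
  -- prefix sum within a bin
  set pre : Fin m → ℕ :=
    fun i => ∑ j ∈ Finset.univ.filter (fun j => f j = f i ∧ j < i), s j with hpre
  set σ : Fin m ⊕ Fin (b - 1) → ℕ :=
    Sum.elim (fun i => (f i).val * (B + 1) + pre i)
      (fun k => k.val * (B + 1) + B) with hσ
  -- each item fits in its bin window
  have hend : ∀ i : Fin m, pre i + s i ≤ B := by
    intro i
    have hsub : insert i (Finset.univ.filter (fun j => f j = f i ∧ j < i)) ⊆
        Finset.univ.filter (fun j => f j = f i) := by
      intro j hj
      simp only [Finset.mem_insert, Finset.mem_filter, Finset.mem_univ, true_and] at hj ⊢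
      rcases hj with rfl | ⟨h1, _⟩ <;> simp [*]
    have hni : i ∉ Finset.univ.filter (fun j => f j = f i ∧ j < i) := by
      simp
    calc pre i + s i = ∑ j ∈ insert i (Finset.univ.filter (fun j => f j = f i ∧ j < i)), s j := by
          rw [Finset.sum_insert hni]; ring
      _ ≤ ∑ j ∈ Finset.univ.filter (fun j => f j = f i), s j :=
          Finset.sum_le_sum_of_subset hsub
      _ ≤ B := hf (f i)
  -- monotone within a bin
  have hmono : ∀ i j : Fin m, f i = f j → i < j → pre i + s i ≤ pre j := by
    intro i j hfij hij
    have hsub : insert i (Finset.univ.filter (fun j' => f j' = f i ∧ j' < i)) ⊆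
        Finset.univ.filter (fun j' => f j' = f j ∧ j' < j) := by
      intro j' hj'
      simp only [Finset.mem_insert, Finset.mem_filter, Finset.mem_univ, true_and] at hj' ⊢
      rcases hj' with rfl | ⟨h1, h2⟩
      · exact ⟨hfij, hij⟩
      · exact ⟨h1.trans hfij, h2.trans hij⟩
    have hni : i ∉ Finset.univ.filter (fun j' => f j' = f i ∧ j' < i) := by simp
    calc pre i + s i
        = ∑ j' ∈ insert i (Finset.univ.filter (fun j' => f j' = f i ∧ j' < i)), s j' := by
          rw [Finset.sum_insert hni]; ring
      _ ≤ pre j := Finset.sum_le_sum_of_subset hsub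
  -- window bounds for item i
  have hwin : ∀ i : Fin m,
      (f i).val * (B + 1) ≤ σ (Sum.inl i) ∧
      σ (Sum.inl i) + s i ≤ (f i).val * (B + 1) + B := by
    intro i
    constructor
    · simp [hσ]
    · have := hend i
      simp only [hσ, Sum.elim_inl]
      omega
  -- window separation
  have hsep : ∀ u v : ℕ, u < v → u * (B + 1) + B + 1 ≤ v * (B + 1) := by
    intro u v huv
    have : (u + 1) * (B + 1) ≤ v * (B + 1) := Nat.mul_le_mul_right _ huv
    nlinarith
  refine ⟨σ, ?_, ?_, ?_⟩
  · rintro (i | k) <;> simp [hσ, R] <;> ring_nf <;> omega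
  · rintro (i | k) (j | k') hne
    · -- item vs item
      by_cases hfij : f i = f j
      · have hij : i ≠ j := by rintro rfl; exact hne rfl
        rcases hij.lt_or_gt with h | h
        · refine ico_disj (Or.inl ?_)
          have := hmono i j hfij h
          simp only [hσ, P, Sum.elim_inl]
          rw [hfij]; omega
        · refine ico_disj (Or.inr ?_)
          have := hmono j i hfij.symm h
          simp only [hσ, P, Sum.elim_inl]
          rw [hfij]; omega
      · have hv : (f i).val ≠ (f j).val := fun h => hfij (Fin.ext h)
        rcases hv.lt_or_gt with h | h
        · refine ico_disj (Or.inl ?_)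
          have h1 := (hwin i).2
          have h2 := (hwin j).1
          have h3 := hsep _ _ h
          simp only [P, Sum.elim_inl]
          omega
        · refine ico_disj (Or.inr ?_)
          have h1 := (hwin j).2
          have h2 := (hwin i).1
          have h3 := hsep _ _ h
          simp only [P, Sum.elim_inl]
          omega
    · -- item vs separator
      simp only [hσ, P, Sum.elim_inl, Sum.elim_inr]
      rcases le_or_gt (f i).val k'.val with h | h
      · refine ico_disj (Or.inl ?_)
        have h1 := (hwin i).2
        have h2 : (f i).val * (B + 1) + B ≤ k'.val * (B + 1) + B := by
          have := Nat.mul_le_mul_right (B + 1) h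
          omega
        simp only [hσ, Sum.elim_inl] at h1
        omega
      · refine ico_disj (Or.inr ?_)
        have h1 := (hwin i).1
        have h3 := hsep k'.val (f i).val h
        simp only [hσ, Sum.elim_inl] at h1
        omega
    · -- separator vs item
      simp only [hσ, P, Sum.elim_inl, Sum.elim_inr]
      rcases le_or_gt (f j).val k.val with h | h
      · refine ico_disj (Or.inr ?_)
        have h1 := (hwin j).2
        have h2 : (f j).val * (B + 1) + B ≤ k.val * (B + 1) + B := by
          have := Nat.mul_le_mul_right (B + 1) h
          omega
        simp only [hσ, Sum.elim_inl] at h1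
        omega
      · refine ico_disj (Or.inl ?_)
        have h1 := (hwin j).1
        have h3 := hsep k.val (f j).val h
        simp only [hσ, Sum.elim_inl] at h1
        omega
    · -- separator vs separator
      have hkk : k.val ≠ k'.val := fun h => hne (by rw [Fin.ext h])
      simp only [hσ, P, Sum.elim_inr]
      rcases hkk.lt_or_gt with h | h
      · refine ico_disj (Or.inl ?_)
        have := hsep k.val k'.val h
        omega
      · refine ico_disj (Or.inr ?_)
        have := hsep k'.val k.val h
        omega
  · rintro (i | k)
    · -- item due date
      have hb : 0 < b := (f i).pos
      obtain ⟨b', rfl⟩ : ∃ b', b = b' + 1 := ⟨b - 1, by omega⟩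
      have hk : (f i).val ≤ b' := by omega
      have h1 := (hwin i).2
      have h2 : (f i).val * (B + 1) ≤ b' * (B + 1) := Nat.mul_le_mul_right _ hk
      simp only [P, D, Sum.elim_inl]
      have : (b' + 1) * B + (b' + 1) - 1 = b' * (B + 1) + B := by ring_nf; omega
      omega
    · simp only [hσ, P, D, Sum.elim_inr]
      have : (k.val + 1) * B + k.val + 1 = k.val * (B + 1) + B + 1 := by ring
      omega
end

section
/- (Bin Packing to scheduling, backward direction) In the scheduling instance constructed from a Bin Packing instance with b bins of capacity B (item jobs with processing time s_i, release date 0, due date bB+b-1; separator jobs with processing time 1, release date kB+k-1, due date kB+k for k=1,…,b-1), if there is a schedule in which all jobs are early, then the items can be partitioned into b parts each of total size at most B. -/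
/-- Bin Packing to scheduling, backward direction. -/
theorem stmt_10 (m b B : ℕ) (hb : 1 ≤ b) (s : Fin m → ℕ)
    (hsched : ∃ σ : Fin m ⊕ Fin (b - 1) → ℕ,
      (∀ j, Sum.elim (fun _ : Fin m => 0)
        (fun k : Fin (b - 1) => (k.val + 1) * B + k.val) j ≤ σ j) ∧
      (∀ i j, i ≠ j →
        Disjoint
          (Set.Ico (σ i) (σ i + Sum.elim s (fun _ => 1) i))
          (Set.Ico (σ j) (σ j + Sum.elim s (fun _ => 1) j))) ∧
      (∀ j, σ j + Sum.elim s (fun _ => 1) j ≤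
        Sum.elim (fun _ : Fin m => b * B + b - 1)
          (fun k : Fin (b - 1) => (k.val + 1) * B + k.val + 1) j)) :
    ∃ f : Fin m → Fin b,
      ∀ k : Fin b, ∑ i ∈ Finset.univ.filter (fun i => f i = k), s i ≤ B := by
  classical
  obtain ⟨σ, hrel, hdisj, hdue⟩ := hsched
  have hB1 : 0 < B + 1 := Nat.succ_pos B
  have hbB : b * (B + 1) = b * B + b := by ring
  have key : ∀ i : Fin m, 0 < s i →
      σ (Sum.inl i) / (B + 1) < b ∧
      σ (Sum.inl i) + s i ≤ (σ (Sum.inl i) / (B + 1)) * (B + 1) + B := by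
    intro i hsi
    have hd := hdue (Sum.inl i)
    simp only [Sum.elim_inl] at hd
    have hmod := Nat.mod_lt (σ (Sum.inl i)) hB1
    have hdivmod := Nat.div_add_mod (σ (Sum.inl i)) (B + 1)
    set q := σ (Sum.inl i) / (B + 1) with hq
    have hlt : σ (Sum.inl i) < b * (B + 1) := by omega
    have hqb : q < b := (Nat.div_lt_iff_lt_mul hB1).mpr hlt
    refine ⟨hqb, ?_⟩
    by_contra hcon
    push_neg at hcon
    have e1 : (q + 1) * (B + 1) = q * (B + 1) + B + 1 := by ring
    have hq1b : (q + 1) * (B + 1) < b * (B + 1) := by omega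
    have hq1 : q + 1 < b := Nat.lt_of_mul_lt_mul_right hq1b
    set j : Fin (b - 1) := ⟨q, by omega⟩ with hj
    have hr := hrel (Sum.inr j)
    have hdj := hdue (Sum.inr j)
    simp only [Sum.elim_inr] at hr hdj
    have hjv : j.val = q := rfl
    have hσj : σ (Sum.inr j) = (q + 1) * B + q := by rw [hjv] at hr hdj; omega
    have hD := hdisj (Sum.inl i) (Sum.inr j) (by simp)
    simp only [Sum.elim_inl, Sum.elim_inr] at hD
    have e2 : q * (B + 1) = q * B + q := by ring
    have e3 : (q + 1) * B = q * B + B := by ring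
    have e4 : (B + 1) * q = q * (B + 1) := by ring
    have hp1 : (q + 1) * B + q ∈ Set.Ico (σ (Sum.inl i)) (σ (Sum.inl i) + s i) := by
      constructor <;> omega
    have hp2 : (q + 1) * B + q ∈ Set.Ico (σ (Sum.inr j)) (σ (Sum.inr j) + 1) := by
      constructor <;> omega
    exact Set.disjoint_left.mp hD hp1 hp2
  set f : Fin m → Fin b :=
    fun i => if h : σ (Sum.inl i) / (B + 1) < b then ⟨_, h⟩ else ⟨0, hb⟩ with hf
  refine ⟨f, ?_⟩
  intro k
  have hfi : ∀ i : Fin m, 0 < s i → f i = k → σ (Sum.inl i) / (B + 1) = k.val := by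
    intro i hsi hik
    have hlt := (key i hsi).1
    rw [hf] at hik
    simp only [dif_pos hlt] at hik
    exact congrArg Fin.val hik
  set T := Finset.univ.filter (fun i => f i = k) with hT
  have hpair : ∀ i ∈ T, ∀ j ∈ T, i ≠ j →
      Disjoint (Finset.Ico (σ (Sum.inl i)) (σ (Sum.inl i) + s i))
        (Finset.Ico (σ (Sum.inl j)) (σ (Sum.inl j) + s j)) := by
    intro i _ j _ hij
    have hD := hdisj (Sum.inl i) (Sum.inl j) (by simp [hij])
    simp only [Sum.elim_inl] at hD
    rw [Finset.disjoint_left]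
    intro a ha ha'
    exact Set.disjoint_left.mp hD (Set.mem_Ico.mpr (Finset.mem_Ico.mp ha))
      (Set.mem_Ico.mpr (Finset.mem_Ico.mp ha'))
  have hsub : (T.biUnion fun i => Finset.Ico (σ (Sum.inl i)) (σ (Sum.inl i) + s i)) ⊆
      Finset.Ico (k.val * (B + 1)) (k.val * (B + 1) + B) := by
    intro a ha
    rw [Finset.mem_biUnion] at ha
    obtain ⟨i, hiT, hai⟩ := ha
    rw [Finset.mem_Ico] at hai ⊢
    have hsi : 0 < s i := by omega
    have hdiv := hfi i hsi ((Finset.mem_filter.mp hiT).2)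
    have hk2 := (key i hsi).2
    have hle : (σ (Sum.inl i) / (B + 1)) * (B + 1) ≤ σ (Sum.inl i) :=
      Nat.div_mul_le_self _ _
    rw [hdiv] at hk2 hle
    omega
  calc ∑ i ∈ T, s i
      = ∑ i ∈ T, (Finset.Ico (σ (Sum.inl i)) (σ (Sum.inl i) + s i)).card := by
        refine Finset.sum_congr rfl fun i _ => ?_
        rw [Nat.card_Ico]; omega
    _ = (T.biUnion fun i => Finset.Ico (σ (Sum.inl i)) (σ (Sum.inl i) + s i)).card :=
        (Finset.card_biUnion hpair).symm
    _ ≤ (Finset.Ico (k.val * (B + 1)) (k.val * (B + 1) + B)).card :=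
        Finset.card_le_card hsub
    _ = B := by rw [Nat.card_Ico]; omega
end
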